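/- For every odd prime p there exist a strictly increasing sequence of integers α(s) and sets K_s ⊆ (Z/p^{α(s)}Z)² such that each K_s contains, for every ω ∈ Z/p^{α(s)}Z, a graph line {(t, tω + c_ω(t)) : t ∈ Z/p^{α(s)}Z} with c_ω(t) independent of t (i.e. a line of slope ω), and |K_s| / p^{2α(s)} ≤ p^{-s}. In particular there are 'Kakeya-type' sets of relative density tending to 0. -/

import Mathlib

lemma sum_digits_mod (p : ℕ) (hp : 1 < p) (W : ℕ) (n : ℕ) :
    (∑ j ∈ Finset.range n, (W / p ^ j % p) * p ^ j) = W % p ^ n := by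
  induction n with
  | zero => simp [Nat.mod_one]
  | succ n ih =>
    rw [Finset.sum_range_succ, ih]
    have hpn : 0 < p ^ n := pow_pos (by omega) n
    have h2 := Nat.div_add_mod W (p ^ n)
    have h3 : W % p ^ n < p ^ n := Nat.mod_lt _ hpn
    have h4 : W / p ^ n % p < p := Nat.mod_lt _ (by omega)
    have e1 : p ^ n * (W / p ^ n) % (p ^ n * p) = p ^ n * (W / p ^ n % p) :=
      Nat.mul_mod_mul_left _ _ _
    have hlt : p ^ n * (W / p ^ n % p) + W % p ^ n < p ^ n * p := by
      calc p ^ n * (W / p ^ n % p) + W % p ^ n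
          < p ^ n * (W / p ^ n % p) + p ^ n := by omega
        _ = p ^ n * (W / p ^ n % p + 1) := by ring
        _ ≤ p ^ n * p := Nat.mul_le_mul_left _ (by omega)
    have h5 : W % (p ^ n * p) = p ^ n * (W / p ^ n % p) + W % p ^ n := by
      conv_lhs => rw [← h2]
      rw [Nat.add_mod, e1,
        Nat.mod_eq_of_lt (lt_of_lt_of_le h3 (Nat.le_mul_of_pos_right _ (by omega))),
        Nat.mod_eq_of_lt hlt]
    rw [pow_succ, h5]
    ring

lemma digit_of_mod (p : ℕ) (hp : 1 < p) (W k j : ℕ) (hj : j < k) :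
    (W % p ^ k) / p ^ j % p = W / p ^ j % p := by
  have e : W = W % p ^ k + p ^ j * (p ^ (k - j) * (W / p ^ k)) := by
    rw [← mul_assoc, ← pow_add]
    have h : j + (k - j) = k := by omega
    rw [h]
    have := Nat.div_add_mod W (p ^ k)
    omega
  conv_rhs => rw [e]
  rw [Nat.add_mul_div_left _ _ (pow_pos (by omega) j)]
  have e2 : p ^ (k - j) * (W / p ^ k) = p * (p ^ (k - j - 1) * (W / p ^ k)) := by
    rw [← mul_assoc]
    congr 1
    rw [← pow_succ']
    congr 1
    omega
  rw [e2, Nat.add_mul_mod_self_left]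

lemma exists_compl (T Q : ℕ) (hq : 0 < Q) : ∃ m, m < Q ∧ ∃ d, T + m = Q * d := by
  obtain ⟨q, r, hr, rfl⟩ : ∃ q r, r < Q ∧ T = Q * q + r :=
    ⟨T / Q, T % Q, Nat.mod_lt T hq, (Nat.div_add_mod T Q).symm⟩
  rcases eq_or_ne r 0 with rfl | h
  · exact ⟨0, hq, q, by simp⟩
  · refine ⟨Q - r, by omega, q + 1, ?_⟩
    rw [mul_add, mul_one]
    generalize Q * q = A
    omega

lemma key_card' (p s α : ℕ) (hp1 : 1 < p) [NeZero (p ^ α)]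
    (hα : ∀ m, m < p ^ s → s * m + s ≤ α) (t : ZMod (p ^ α)) :
    (Finset.image (fun ω : ZMod (p ^ α) =>
      t * ω + ((∑ j ∈ Finset.range α,
          (j / s) * (ω.val / p ^ j % p) * p ^ j : ℕ) : ZMod (p ^ α)))
      Finset.univ).card ≤ p ^ (α - s) := by
  obtain ⟨m, hm, d, hd⟩ := exists_compl t.val (p ^ s) (pow_pos (by omega) s)
  have hks : s * m + s ≤ α := hα m hm
  haveI : NeZero (p ^ (s * m)) := ⟨pow_ne_zero _ (by omega)⟩
  haveI : NeZero (p ^ (α - (s * m + s))) := ⟨pow_ne_zero _ (by omega)⟩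
  set T := t.val with hT
  set k := s * m with hk
  set h : ZMod (p ^ k) × ZMod (p ^ (α - (k + s))) → ZMod (p ^ α) := fun q =>
    ((∑ j ∈ Finset.range k, (T + j / s) * (q.1.val / p ^ j % p) * p ^ j : ℕ) : ZMod (p ^ α))
      + ((p : ZMod (p ^ α)) ^ (k + s)) * ((q.2.val : ℕ) : ZMod (p ^ α)) with hh
  have hsub : (Finset.image (fun ω : ZMod (p ^ α) =>
      t * ω + ((∑ j ∈ Finset.range α,
          (j / s) * (ω.val / p ^ j % p) * p ^ j : ℕ) : ZMod (p ^ α))) Finset.univ)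
      ⊆ Finset.image h Finset.univ := by
    intro y hy
    rw [Finset.mem_image] at hy
    obtain ⟨ω, -, rfl⟩ := hy
    set W := ω.val with hW
    have hWlt : W < p ^ α := ZMod.val_lt ω
    set N : ℕ := ∑ j ∈ Finset.range α, (T + j / s) * (W / p ^ j % p) * p ^ j with hN
    set G : ℕ := ∑ j ∈ Finset.range k, (T + j / s) * (W / p ^ j % p) * p ^ j with hG
    set S : ℕ := ∑ j ∈ Finset.Ico k α, (T + j / s) * (W / p ^ j % p) * p ^ j with hS
    have hGS : G + S = N := by
      rw [hG, hS, hN, Finset.range_eq_Ico, Finset.range_eq_Ico]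
      exact Finset.sum_Ico_consecutive _ (Nat.zero_le k) (by omega)
    have hdvd : p ^ (k + s) ∣ S := by
      apply Finset.dvd_sum
      intro j hj
      rw [Finset.mem_Ico] at hj
      by_cases hjk : k + s ≤ j
      · exact Dvd.dvd.mul_left (pow_dvd_pow p hjk) _
      · have hjdiv : j / s = m := by
          have h1 : m * s ≤ j := le_trans (le_of_eq (mul_comm m s)) hj.1
          have h2 : j < (m + 1) * s := by
            have h3 : j < k + s := by omega
            calc j < s * m + s := h3
              _ = (m + 1) * s := by ring
          exact Nat.div_eq_of_lt_le h1 h2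
        rw [hjdiv, hd]
        have h3 : p ^ (k + s) ∣ p ^ s * p ^ j := by
          rw [← pow_add]
          exact pow_dvd_pow p (by omega)
        exact h3.trans ⟨d * (W / p ^ j % p), by ring⟩
    obtain ⟨b0, hb0⟩ := hdvd
    rw [Finset.mem_image]
    refine ⟨((W : ZMod (p ^ k)), ((b0 : ℕ) : ZMod (p ^ (α - (k + s))))), Finset.mem_univ _, ?_⟩
    have hval1 : ((W : ZMod (p ^ k))).val = W % p ^ k := ZMod.val_natCast _ _
    have hval2 : (((b0 : ℕ) : ZMod (p ^ (α - (k + s))))).val = b0 % p ^ (α - (k + s)) :=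
      ZMod.val_natCast _ _
    have hGlow : (∑ j ∈ Finset.range k, (T + j / s) * ((W % p ^ k) / p ^ j % p) * p ^ j) = G := by
      apply Finset.sum_congr rfl
      intro j hj
      rw [Finset.mem_range] at hj
      rw [digit_of_mod p hp1 W k j hj]
    have hfN : t * ω + ((∑ j ∈ Finset.range α,
        (j / s) * (W / p ^ j % p) * p ^ j : ℕ) : ZMod (p ^ α)) = ((N : ℕ) : ZMod (p ^ α)) := by
      have hNsplit : N = T * W + ∑ j ∈ Finset.range α, (j / s) * (W / p ^ j % p) * p ^ j := by
        rw [hN]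
        have e : ∀ j ∈ Finset.range α, (T + j / s) * (W / p ^ j % p) * p ^ j
            = T * ((W / p ^ j % p) * p ^ j) + (j / s) * (W / p ^ j % p) * p ^ j := by
          intro j _; ring
        rw [Finset.sum_congr rfl e, Finset.sum_add_distrib, ← Finset.mul_sum,
          sum_digits_mod p hp1 W α, Nat.mod_eq_of_lt hWlt]
      rw [hNsplit]
      push_cast
      congr 1
      rw [hT, hW]
      rw [ZMod.natCast_val, ZMod.natCast_val, ZMod.cast_id, ZMod.cast_id]
    rw [hfN, hh]
    simp only [hval1, hval2, hGlow]
    have hNG : N = G + p ^ (k + s) * b0 := by rw [← hGS, hb0]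
    rw [hNG]
    push_cast
    congr 1
    have hb0split : b0 = p ^ (α - (k + s)) * (b0 / p ^ (α - (k + s))) + b0 % p ^ (α - (k + s)) :=
      (Nat.div_add_mod _ _).symm
    have hzero : (p : ZMod (p ^ α)) ^ (k + s) * (p : ZMod (p ^ α)) ^ (α - (k + s)) = 0 := by
      rw [← pow_add]
      have e1 : k + s + (α - (k + s)) = α := by omega
      rw [e1]
      have e2 : ((p : ZMod (p ^ α)) ^ α) = ((p ^ α : ℕ) : ZMod (p ^ α)) := by push_cast; ring
      rw [e2, ZMod.natCast_self]
    conv_rhs => rw [hb0split]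
    push_cast
    rw [mul_add, ← mul_assoc, hzero, zero_mul, zero_add]
  calc (Finset.image (fun ω : ZMod (p ^ α) =>
      t * ω + ((∑ j ∈ Finset.range α,
          (j / s) * (ω.val / p ^ j % p) * p ^ j : ℕ) : ZMod (p ^ α))) Finset.univ).card
      ≤ (Finset.image h Finset.univ).card := Finset.card_le_card hsub
    _ ≤ (Finset.univ : Finset (ZMod (p ^ k) × ZMod (p ^ (α - (k + s))))).card :=
        Finset.card_image_le
    _ = p ^ k * p ^ (α - (k + s)) := by
        rw [Finset.card_univ, Fintype.card_prod, ZMod.card, ZMod.card]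
    _ = p ^ (α - s) := by
        rw [← pow_add]
        congr 1
        omega

/-- Kakeya-type sets of vanishing density over `ℤ/p^αℤ`: for every odd prime `p`
there are a strictly increasing sequence `α(s)` and sets
`K_s ⊆ (ℤ/p^{α(s)}ℤ)²` such that `K_s` contains, for every slope
`ω ∈ ℤ/p^{α(s)}ℤ`, a line `{(t, tω + c_ω) : t}`, and
`|K_s| / p^{2α(s)} ≤ p^{-s}`. -/
theorem stmt_15 (p : ℕ) (hp : p.Prime) (hodd : p ≠ 2) :
    ∃ α : ℕ → ℕ, StrictMono α ∧
      ∃ K : ∀ s : ℕ, Set (ZMod (p ^ α s) × ZMod (p ^ α s)),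
        ∀ s : ℕ,
          (∀ ω : ZMod (p ^ α s), ∃ c : ZMod (p ^ α s),
            ∀ t : ZMod (p ^ α s), (t, t * ω + c) ∈ K s) ∧
          (Nat.card (K s) : ℝ) / (p : ℝ) ^ (2 * α s) ≤ (p : ℝ) ^ (-(s : ℤ)) := by
  have hp1 : 1 < p := hp.one_lt
  refine ⟨fun s => s * p ^ s, ?_, ?_⟩
  · apply strictMono_nat_of_lt_succ
    intro s
    have h1 : 0 < p ^ (s + 1) := pow_pos (by omega) _
    calc s * p ^ s ≤ s * p ^ (s + 1) :=
          Nat.mul_le_mul_left _ (Nat.pow_le_pow_right (by omega) (by omega))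
      _ < (s + 1) * p ^ (s + 1) := by
          have := Nat.mul_lt_mul_of_lt_of_le (show s < s + 1 by omega) (le_refl (p ^ (s + 1))) h1
          exact this
  · refine ⟨fun s => Set.range (fun q : ZMod (p ^ (s * p ^ s)) × ZMod (p ^ (s * p ^ s)) =>
      (q.1, q.1 * q.2 + ((∑ j ∈ Finset.range (s * p ^ s),
        (j / s) * (q.2.val / p ^ j % p) * p ^ j : ℕ) : ZMod (p ^ (s * p ^ s))))), ?_⟩
    intro s
    haveI : NeZero (p ^ (s * p ^ s)) := ⟨pow_ne_zero _ (by omega)⟩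
    classical
    constructor
    · intro ω
      exact ⟨((∑ j ∈ Finset.range (s * p ^ s),
        (j / s) * (ω.val / p ^ j % p) * p ^ j : ℕ) : ZMod (p ^ (s * p ^ s))),
        fun t => ⟨(t, ω), rfl⟩⟩
    · set n := s * p ^ s with hn
      have hsn : s ≤ n := by
        rw [hn]
        calc s = s * 1 := (mul_one s).symm
          _ ≤ s * p ^ s := Nat.mul_le_mul_left _ (Nat.one_le_pow _ _ (by omega))
      set F := fun q : ZMod (p ^ n) × ZMod (p ^ n) =>
        (q.1, q.1 * q.2 + ((∑ j ∈ Finset.range n,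
          (j / s) * (q.2.val / p ^ j % p) * p ^ j : ℕ) : ZMod (p ^ n))) with hF
      have hKcard : Nat.card (Set.range F) ≤ p ^ n * p ^ (n - s) := by
        have hset : Set.range F = ↑(Finset.image F Finset.univ) := by
          simp [Finset.coe_image]
        rw [Nat.card_coe_set_eq, hset, Set.ncard_coe_finset]
        have hsubd : Finset.image F Finset.univ ⊆
            Finset.univ.biUnion (fun t : ZMod (p ^ n) =>
              Finset.image (fun ω : ZMod (p ^ n) =>
                (t, t * ω + ((∑ j ∈ Finset.range n,
                  (j / s) * (ω.val / p ^ j % p) * p ^ j : ℕ) : ZMod (p ^ n)))) Finset.univ) := by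
          intro y hy
          rw [Finset.mem_image] at hy
          obtain ⟨q, -, rfl⟩ := hy
          rw [Finset.mem_biUnion]
          exact ⟨q.1, Finset.mem_univ _, Finset.mem_image.mpr ⟨q.2, Finset.mem_univ _, rfl⟩⟩
        calc (Finset.image F Finset.univ).card
            ≤ (Finset.univ.biUnion (fun t : ZMod (p ^ n) =>
              Finset.image (fun ω : ZMod (p ^ n) =>
                (t, t * ω + ((∑ j ∈ Finset.range n,
                  (j / s) * (ω.val / p ^ j % p) * p ^ j : ℕ) : ZMod (p ^ n)))) Finset.univ)).card :=
              Finset.card_le_card hsubd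
          _ ≤ ∑ t : ZMod (p ^ n), (Finset.image (fun ω : ZMod (p ^ n) =>
                (t, t * ω + ((∑ j ∈ Finset.range n,
                  (j / s) * (ω.val / p ^ j % p) * p ^ j : ℕ) : ZMod (p ^ n)))) Finset.univ).card :=
              Finset.card_biUnion_le
          _ ≤ ∑ _t : ZMod (p ^ n), p ^ (n - s) := by
              apply Finset.sum_le_sum
              intro t _
              have himg : (Finset.image (fun ω : ZMod (p ^ n) =>
                  (t, t * ω + ((∑ j ∈ Finset.range n,
                    (j / s) * (ω.val / p ^ j % p) * p ^ j : ℕ) : ZMod (p ^ n)))) Finset.univ)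
                  = Finset.image (Prod.mk t) ((Finset.image (fun ω : ZMod (p ^ n) =>
                    t * ω + ((∑ j ∈ Finset.range n,
                      (j / s) * (ω.val / p ^ j % p) * p ^ j : ℕ) : ZMod (p ^ n))) Finset.univ)) := by
                rw [Finset.image_image]
                rfl
              rw [himg, Finset.card_image_of_injective _ (fun x y hxy => by
                simpa using hxy)]
              exact key_card' p s n hp1 (fun m hm => by
                calc s * m + s = s * (m + 1) := by ring
                  _ ≤ s * p ^ s := Nat.mul_le_mul_left _ hm) t
          _ = p ^ n * p ^ (n - s) := by
              rw [Finset.sum_const, smul_eq_mul, Finset.card_univ, ZMod.card]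
      have hpow : p ^ n * p ^ (n - s) = p ^ (2 * n - s) := by
        rw [← pow_add]
        congr 1
        omega
      have hreal : (Nat.card (Set.range F) : ℝ) ≤ (p : ℝ) ^ (2 * n - s) := by
        rw [hpow] at hKcard
        exact_mod_cast hKcard
      have hppos : (0 : ℝ) < (p : ℝ) := by exact_mod_cast hp.pos
      rw [div_le_iff₀ (by positivity)]
      have hz : (p : ℝ) ^ (-(s : ℤ)) * (p : ℝ) ^ (2 * n) = (p : ℝ) ^ (2 * n - s) := by
        have e : (p : ℝ) ^ (2 * n) = (p : ℝ) ^ s * (p : ℝ) ^ (2 * n - s) := by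
          rw [← pow_add]
          congr 1
          omega
        rw [zpow_neg, zpow_natCast, e, ← mul_assoc, inv_mul_cancel₀ (by positivity), one_mul]
      rw [hz]
      exact hreal
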